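/- Let n be a positive integer and let D be a division ring, viewed as a first-order structure in the language of rings, satisfying (†)_n. Then for every infinite subfield K of D whose underlying set is definable, D has dimension at most n as a left K-vector space. -/

import Mathlib

open FirstOrder FirstOrder.Language Set

namespace DaggerAux

variable {D : Type*} [DivisionRing D] [FirstOrder.Ring.CompatibleRing D]

lemma realize_foldr_sum {α : Type*} (l : List (Language.ring.Term α)) (v : α → D) :
    (l.foldr (· + ·) 0).realize v = (l.map (Term.realize v)).sum := by
  induction l with
  | nil => simp [Ring.realize_zero]
  | cons a l ih => simp [Ring.realize_add, ih]

/-- The set of linear combinations `∑ c j * v j` with `c j ∈ K` and `c i = 0` is definable. -/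
lemma definable_linComb {m : ℕ} (K : Set D)
    (hK : Set.Definable₁ (Set.univ : Set D) Language.ring K) (v : Fin m → D) (i : Fin m) :
    Set.Definable₁ (Set.univ : Set D) Language.ring
      {x : D | ∃ c : Fin m → D, (∀ j, c j ∈ K) ∧ c i = 0 ∧ x = ∑ j, c j * v j} := by
  classical
  set A : Set D := Set.univ
  -- variables : Fin 1 (the element) ⊕ Fin m (the coefficients)
  set α := (Fin 1 ⊕ Fin m)
  -- coefficients in K
  have h1 : A.Definable Language.ring
      (⋂ j ∈ (Finset.univ : Finset (Fin m)),
        ((fun g : α → D => g ∘ (fun _ : Fin 1 => Sum.inr j)) ⁻¹'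
          {x : Fin 1 → D | x 0 ∈ K})) :=
    Set.definable_biInter_finset (fun j => hK.preimage_comp _) _
  -- c i = 0
  have h2 : A.Definable Language.ring {g : α → D | g (Sum.inr i) = 0} := by
    rw [Set.definable_iff_exists_formula_sum]
    refine ⟨Term.equal (Term.var (Sum.inr (Sum.inr i))) 0, ?_⟩
    ext g
    simp [Formula.realize_equal, Ring.realize_zero, Term.realize]
  -- x = ∑ c j * v j
  have h3 : A.Definable Language.ring
      {g : α → D | g (Sum.inl 0) = ∑ j, g (Sum.inr j) * v j} := by
    rw [Set.definable_iff_exists_formula_sum]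
    refine ⟨Term.equal (Term.var (Sum.inr (Sum.inl 0)))
      (((List.finRange m).map (fun j =>
          Term.var (Sum.inr (Sum.inr j)) *
            Term.var (Sum.inl (⟨v j, Set.mem_univ _⟩ : A)))).foldr (· + ·) 0), ?_⟩
    ext g
    simp only [Set.mem_setOf_eq, Formula.realize_equal, realize_foldr_sum,
      List.map_map, Fin.sum_univ_def, Function.comp_def, FirstOrder.Ring.realize_mul,
      Term.realize_var, Sum.elim_inr, Sum.elim_inl]
  have hS := (h1.inter (h2.inter h3)).image_comp (Sum.inl : Fin 1 → α)
  have heq : ((fun g : α → D => g ∘ Sum.inl) ''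
      ((⋂ j ∈ (Finset.univ : Finset (Fin m)),
        ((fun g : α → D => g ∘ (fun _ : Fin 1 => Sum.inr j)) ⁻¹'
          {x : Fin 1 → D | x 0 ∈ K})) ∩
        ({g : α → D | g (Sum.inr i) = 0} ∩
          {g : α → D | g (Sum.inl 0) = ∑ j, g (Sum.inr j) * v j}))) =
      {x : Fin 1 → D |
        x 0 ∈ {y : D | ∃ c : Fin m → D, (∀ j, c j ∈ K) ∧ c i = 0 ∧ y = ∑ j, c j * v j}} := by
    ext x
    constructor
    · rintro ⟨g, ⟨hg1, hg2, hg3⟩, rfl⟩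
      refine ⟨fun j => g (Sum.inr j), fun j => ?_, hg2, hg3⟩
      have := Set.mem_iInter₂.1 hg1 j (Finset.mem_univ _)
      simpa using this
    · rintro ⟨c, hc, hci, hx⟩
      refine ⟨Sum.elim x c, ⟨Set.mem_iInter₂.2 fun j _ => ?_, ?_, ?_⟩, ?_⟩
      · simpa using hc j
      · simpa using hci
      · simpa using hx
      · ext k; fin_cases k; rfl
  rwa [heq] at hS

end DaggerAux

/-- The chain condition (†)_n: for any definable additive subgroups H_0, …, H_n of (D,+), there
is some j ≤ n such that ⋂_{i≤n} H_i has finite index in ⋂_{i≠j} H_i. -/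
def SatisfiesDagger (D : Type*) [DivisionRing D] [FirstOrder.Ring.CompatibleRing D]
    (n : ℕ) : Prop :=
  ∀ H : Fin (n + 1) → AddSubgroup D,
    (∀ i, Set.Definable₁ (Set.univ : Set D) FirstOrder.Language.ring (H i : Set D)) →
    ∃ j : Fin (n + 1),
      ((⨅ i, H i).addSubgroupOf (⨅ i ∈ ({j}ᶜ : Set (Fin (n + 1))), H i)).index ≠ 0

/-- Let n be a positive integer and D a division ring, viewed as a first-order structure in the
language of rings, satisfying (†)_n. Then for every infinite subfield K of D whose underlying
set is definable, D has dimension at most n as a left K-vector space. -/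
theorem stmt_8 (n : ℕ) (hn : 0 < n) (D : Type*) [DivisionRing D]
    [FirstOrder.Ring.CompatibleRing D]
    (hdag : SatisfiesDagger D n)
    (K : Subfield D)
    (hcomm : ∀ x ∈ K, ∀ y ∈ K, x * y = y * x)
    (hKinf : (K : Set D).Infinite)
    (hKdef : Set.Definable₁ (Set.univ : Set D) FirstOrder.Language.ring (K : Set D)) :
    Module.rank K D ≤ n := by
  classical
  by_contra hlt
  rw [not_le] at hlt
  have hle : ((n + 1 : ℕ) : Cardinal) ≤ Module.rank K D := by
    rw [Cardinal.nat_succ]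
    exact Order.succ_le_of_lt hlt
  obtain ⟨s, hcard, hli⟩ := le_rank_iff_exists_linearIndependent_finset.1 hle
  -- build a linearly independent family `v : Fin (n+1) → D`
  have hscard : Fintype.card ↥(s : Set D) = n + 1 := by
    simpa [hcard] using (Fintype.card_coe s)
  let e : Fin (n + 1) ≃ ↥(s : Set D) := (Fintype.equivFinOfCardEq hscard).symm
  set v : Fin (n + 1) → D := fun i => (e i : D) with hv
  have hliv : LinearIndependent K v := hli.comp e e.injective
  -- uniqueness of coefficients
  have huniq : ∀ c c' : Fin (n + 1) → D, (∀ j, c j ∈ K) → (∀ j, c' j ∈ K) →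
      ∑ j, c j * v j = ∑ j, c' j * v j → c = c' := by
    intro c c' hc hc' hsum
    have h0 : ∑ j, (⟨c j - c' j, sub_mem (hc j) (hc' j)⟩ : K) • v j = 0 := by
      have : ∑ j, (c j - c' j) * v j = 0 := by
        simp only [sub_mul, Finset.sum_sub_distrib, hsum, sub_self]
      simpa [Subfield.smul_def, smul_eq_mul] using this
    have := Fintype.linearIndependent_iff.1 hliv _ h0
    funext j
    have hj := this j
    have : c j - c' j = 0 := by
      simpa using congrArg (Subtype.val) hj
    exact sub_eq_zero.mp this
  -- the definable additive subgroups
  set H : Fin (n + 1) → AddSubgroup D := fun i =>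
    { carrier := {x | ∃ c : Fin (n + 1) → D, (∀ j, c j ∈ K) ∧ c i = 0 ∧ x = ∑ j, c j * v j}
      add_mem' := by
        rintro a b ⟨c, hc, hci, rfl⟩ ⟨c', hc', hci', rfl⟩
        exact ⟨c + c', fun j => add_mem (hc j) (hc' j), by simp [hci, hci'], by
          simp [add_mul, Finset.sum_add_distrib]⟩
      zero_mem' := ⟨0, fun j => zero_mem K, rfl, by simp⟩
      neg_mem' := by
        rintro a ⟨c, hc, hci, rfl⟩
        exact ⟨-c, fun j => neg_mem (hc j), by simp [hci], by
          simp [neg_mul, ← Finset.sum_neg_distrib]⟩ } with hH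
  have hHdef : ∀ i, Set.Definable₁ (Set.univ : Set D) Language.ring ((H i : Set D)) :=
    fun i => DaggerAux.definable_linComb (K : Set D) hKdef v i
  obtain ⟨j, hj⟩ := hdag H hHdef
  -- the full intersection is trivial
  have hbot : (⨅ i, H i) = ⊥ := by
    rw [eq_bot_iff]
    intro x hx
    simp only [AddSubgroup.mem_iInf] at hx
    obtain ⟨c0, hc0, -, rfl⟩ := hx 0
    have hall : ∀ i, c0 i = 0 := by
      intro i
      obtain ⟨c, hc, hci, hxc⟩ := hx i
      rw [huniq c0 c hc0 hc hxc]
      exact hci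
    simp only [AddSubgroup.mem_bot]
    simp [hall]
  -- so the other intersection is finite
  have hGfin : Finite ↥(⨅ i ∈ ({j}ᶜ : Set (Fin (n + 1))), H i) := by
    rw [hbot, AddSubgroup.bot_addSubgroupOf, AddSubgroup.index_bot] at hj
    exact (Nat.card_ne_zero.mp hj).2
  -- but K embeds into it
  have hmem : ∀ k : K, (k : D) * v j ∈ ⨅ i ∈ ({j}ᶜ : Set (Fin (n + 1))), H i := by
    intro k
    simp only [AddSubgroup.mem_iInf]
    intro i hi
    refine ⟨fun l => if l = j then (k : D) else 0, fun l => ?_, ?_, ?_⟩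
    · by_cases h : l = j <;> simp [h, k.2, zero_mem]
    · simp [Set.mem_compl_iff, Set.mem_singleton_iff] at hi
      simp [hi]
    · rw [Finset.sum_congr rfl (fun l _ => ?_), Finset.sum_ite_eq' Finset.univ j
        (fun l => (k : D) * v l)]
      · simp
      · rw [ite_mul, zero_mul]
  have hvj : v j ≠ 0 := hliv.ne_zero j
  have hinj : Function.Injective
      (fun k : K => (⟨(k : D) * v j, hmem k⟩ :
        ↥(⨅ i ∈ ({j}ᶜ : Set (Fin (n + 1))), H i))) := by
    intro k k' hkk'
    have : (k : D) * v j = (k' : D) * v j := congrArg Subtype.val hkk'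
    exact Subtype.ext (mul_right_cancel₀ hvj this)
  have : Finite ↥(K : Set D) := Finite.of_injective _ hinj
  exact (Set.infinite_coe_iff.2 hKinf).not_finite this
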